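/- Let α = φ - 1, so that s_α is the Fibonacci infinite word. For each integer m > 1, let k_m denote the maximal exponent of an abelian power of period m occurring in s_α. Then limsup_{m→∞} k_m/m = √5. -/

import Mathlib

open scoped Classical

/-- The Parikh vector (number of `a`'s, number of `b`'s) of the length-`m` factor of the
Sturmian word `s_{α,0}` starting at position `n`, where the letter at position `p ≥ 1` is
`a` iff `{pα} ≥ {-α} = 1 - α`. -/
noncomputable def sturmParikh (α : ℝ) (n m : ℕ) : ℕ × ℕ :=
  (((Finset.range m).filter fun i => 1 - α ≤ Int.fract (((n + i : ℕ) : ℝ) * α)).card,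
   ((Finset.range m).filter fun i => Int.fract (((n + i : ℕ) : ℝ) * α) < 1 - α).card)

/-- The Sturmian word `s_{α,0}` contains an abelian power of period `m` and exponent `k`:
some factor of length `k*m` splits into `k` blocks of length `m` with equal Parikh vectors. -/
noncomputable def HasAbelianPower (α : ℝ) (m k : ℕ) : Prop :=
  ∃ n : ℕ, 1 ≤ n ∧ ∀ j < k, sturmParikh α (n + j * m) m = sturmParikh α n m

open Filter

namespace Fib5

noncomputable def a : ℝ := (Real.sqrt 5 - 1) / 2
noncomputable def ph : ℝ := (Real.sqrt 5 + 1) / 2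

lemma sqrt5_sq : Real.sqrt 5 ^ 2 = 5 := Real.sq_sqrt (by norm_num)
lemma sqrt5_pos : 0 < Real.sqrt 5 := Real.sqrt_pos.2 (by norm_num)
lemma two_lt_sqrt5 : 2 < Real.sqrt 5 := by nlinarith [sqrt5_sq, sqrt5_pos]
lemma sqrt5_lt_3 : Real.sqrt 5 < 3 := by nlinarith [sqrt5_sq, sqrt5_pos]
lemma a_pos : 0 < a := by unfold a; nlinarith [two_lt_sqrt5]
lemma a_lt_one : a < 1 := by unfold a; nlinarith [sqrt5_lt_3]
lemma ph_pos : 0 < ph := by unfold ph; nlinarith [two_lt_sqrt5]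
lemma one_lt_ph : 1 < ph := by unfold ph; nlinarith [two_lt_sqrt5]
lemma a_mul_ph : a * ph = 1 := by unfold a ph; nlinarith [sqrt5_sq]
lemma a_sq : a ^ 2 = 1 - a := by unfold a; nlinarith [sqrt5_sq]
lemma ph_sq : ph ^ 2 = ph + 1 := by unfold ph; nlinarith [sqrt5_sq]
lemma sqrt5_eq : Real.sqrt 5 = 2 * a + 1 := by unfold a; ring
lemma irr_a : Irrational a := by
  have h5 : Irrational (Real.sqrt 5) := (Nat.prime_five).irrational_sqrt
  have : Irrational (Real.sqrt 5 - 1) := by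
    simpa using h5.sub_intCast 1
  simpa [a, div_eq_mul_inv] using this.div_intCast (by norm_num : (2:ℤ) ≠ 0)

lemma neg_a_pow (n : ℕ) : (-a)^(n+2) = (-a)^(n+1) + (-a)^n := by
  calc (-a)^(n+2) = (-a)^n * a^2 := by ring
  _ = (-a)^n * (1-a) := by rw [a_sq]
  _ = (-a)^(n+1) + (-a)^n := by ring

lemma ph_pow (n : ℕ) : ph^(n+2) = ph^(n+1) + ph^n := by
  calc ph^(n+2) = ph^n * ph^2 := by ring
  _ = ph^n * (ph+1) := by rw [ph_sq]
  _ = ph^(n+1) + ph^n := by ring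

lemma fib_cast (n : ℕ) : (Nat.fib (n+2) : ℝ) = Nat.fib (n+1) + Nat.fib n := by
  rw [Nat.fib_add_two]; push_cast; ring

lemma fib_a : ∀ n : ℕ, (Nat.fib (n+1) : ℝ) * a = (Nat.fib n : ℝ) - (-a)^(n+1) := by
  intro n
  induction n using Nat.twoStepInduction with
  | zero => simp
  | one =>
      show (Nat.fib 2 : ℝ) * a = (Nat.fib 1 : ℝ) - (-a)^2
      norm_num [Nat.fib]; nlinarith [a_sq]
  | more n ih1 ih2 =>
      show (Nat.fib (n+3) : ℝ) * a = (Nat.fib (n+2) : ℝ) - (-a)^(n+3)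
      have ih2' : (Nat.fib (n+2) : ℝ) * a = (Nat.fib (n+1) : ℝ) - (-a)^(n+2) := ih2
      have hc : (Nat.fib (n+3) : ℝ) = Nat.fib (n+2) + Nat.fib (n+1) := fib_cast (n+1)
      rw [hc, neg_a_pow (n+1)]
      linear_combination ih1 + ih2' - fib_cast n

lemma fib_sqrt5 : ∀ n : ℕ, (Nat.fib n : ℝ) * Real.sqrt 5 = ph^n - (-a)^n := by
  intro n
  induction n using Nat.twoStepInduction with
  | zero => simp
  | one => simp [ph, a]; ring
  | more n ih1 ih2 =>
      have ih2' : (Nat.fib (n+1) : ℝ) * Real.sqrt 5 = ph^(n+1) - (-a)^(n+1) := ih2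
      rw [fib_cast n, ph_pow, neg_a_pow]
      linear_combination ih1 + ih2'

lemma lucas_eq : ∀ n : ℕ, ((Nat.fib (n+2) : ℝ) + Nat.fib n) = ph^(n+1) + (-a)^(n+1) := by
  intro n
  induction n using Nat.twoStepInduction with
  | zero =>
      show ((Nat.fib 2 : ℝ) + Nat.fib 0) = ph^1 + (-a)^1
      norm_num [Nat.fib]; unfold ph a; ring
  | one =>
      show ((Nat.fib 3 : ℝ) + Nat.fib 1) = ph^2 + (-a)^2
      have h1 : ph - a = 1 := by unfold ph a; ring
      norm_num [Nat.fib]; linarith [ph_sq, a_sq, h1]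
  | more n ih1 ih2 =>
      show ((Nat.fib (n+4) : ℝ) + Nat.fib (n+2)) = ph^(n+3) + (-a)^(n+3)
      have ih2' : ((Nat.fib (n+3) : ℝ) + Nat.fib (n+1)) = ph^(n+2) + (-a)^(n+2) := ih2
      have hc : (Nat.fib (n+4) : ℝ) = Nat.fib (n+3) + Nat.fib (n+2) := fib_cast (n+2)
      rw [hc, fib_cast n, ph_pow (n+1), neg_a_pow (n+1)]
      linear_combination ih1 + ih2' - fib_cast n

variable {α : ℝ}


/-- integer floor of `q * α` for natural `q` -/
noncomputable def fl (α : ℝ) (q : ℕ) : ℤ := ⌊(q : ℝ) * α⌋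

lemma floor_step (h0 : 0 ≤ α) (h1 : α < 1) (p : ℕ) :
    fl α (p+1) = fl α p + (if 1 - α ≤ Int.fract ((p : ℝ) * α) then 1 else 0) := by
  have key : ((p+1 : ℕ) : ℝ) * α = ((fl α p : ℤ) : ℝ) + (Int.fract ((p : ℝ) * α) + α) := by
    rw [fl, Int.fract]; push_cast; ring
  have hf0 := Int.fract_nonneg ((p : ℝ) * α)
  have hf1 := Int.fract_lt_one ((p : ℝ) * α)
  rw [show fl α (p+1) = ⌊((p+1 : ℕ) : ℝ) * α⌋ from rfl, key]
  split_ifs with h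
  · rw [show ((fl α p : ℤ) : ℝ) + (Int.fract ((p : ℝ) * α) + α)
        = Int.fract ((p : ℝ) * α) + α - 1 + ((fl α p + 1 : ℤ) : ℝ) by push_cast; ring,
      Int.floor_add_intCast]
    have : ⌊Int.fract ((p : ℝ) * α) + α - 1⌋ = 0 := by
      rw [Int.floor_eq_zero_iff, Set.mem_Ico]
      constructor <;> linarith
    omega
  · push_neg at h
    rw [Int.floor_intCast_add]
    have : ⌊Int.fract ((p : ℝ) * α) + α⌋ = 0 := by
      rw [Int.floor_eq_zero_iff, Set.mem_Ico]
      constructor <;> linarith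
    omega

lemma acount (h0 : 0 ≤ α) (h1 : α < 1) (n m : ℕ) :
    ((((Finset.range m).filter fun i => 1 - α ≤ Int.fract (((n + i : ℕ) : ℝ) * α)).card : ℤ))
      = fl α (n + m) - fl α n := by
  induction m with
  | zero => simp
  | succ m ih =>
      rw [Finset.range_add_one, Finset.filter_insert]
      have hstep : fl α (n + (m+1)) = fl α (n+m)
          + (if 1 - α ≤ Int.fract (((n+m : ℕ) : ℝ) * α) then 1 else 0) := floor_step h0 h1 (n+m)
      by_cases h : 1 - α ≤ Int.fract (((n + m : ℕ) : ℝ) * α)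
      · rw [if_pos h, Finset.card_insert_of_notMem (by simp), hstep, if_pos h]
        push_cast
        push_cast at ih
        linarith
      · rw [if_neg h, hstep, if_neg h]
        omega

lemma parikh_eq_iff (h0 : 0 ≤ α) (h1 : α < 1) (n n' m : ℕ) :
    sturmParikh α n m = sturmParikh α n' m ↔
      fl α (n + m) - fl α n = fl α (n' + m) - fl α n' := by
  have hsplit : ∀ q : ℕ,
      ((Finset.range m).filter fun i => Int.fract (((q + i : ℕ) : ℝ) * α) < 1 - α).card
      = m - ((Finset.range m).filter fun i => 1 - α ≤ Int.fract (((q + i : ℕ) : ℝ) * α)).card := by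
    intro q
    have := Finset.card_filter_add_card_filter_not
      (s := Finset.range m) (p := fun i => 1 - α ≤ Int.fract (((q + i : ℕ) : ℝ) * α))
    simp only [not_le, Finset.card_range] at this
    omega
  constructor
  · intro h
    have h1' : (((Finset.range m).filter fun i => 1 - α ≤ Int.fract (((n + i : ℕ) : ℝ) * α)).card)
        = (((Finset.range m).filter fun i => 1 - α ≤ Int.fract (((n' + i : ℕ) : ℝ) * α)).card) :=
      congrArg Prod.fst h
    rw [← acount h0 h1 n m, ← acount h0 h1 n' m]
    exact_mod_cast h1'
  · intro h
    have h1' : (((Finset.range m).filter fun i => 1 - α ≤ Int.fract (((n + i : ℕ) : ℝ) * α)).card)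
        = (((Finset.range m).filter fun i => 1 - α ≤ Int.fract (((n' + i : ℕ) : ℝ) * α)).card) := by
      have := (acount h0 h1 n m).trans (h.trans (acount h0 h1 n' m).symm)
      exact_mod_cast this
    unfold sturmParikh
    rw [Prod.mk.injEq]
    exact ⟨h1', by rw [hsplit n, hsplit n', h1']⟩

lemma fract_eq (α : ℝ) (q : ℕ) : Int.fract ((q : ℝ) * α) = (q : ℝ) * α - fl α q := rfl

set_option maxHeartbeats 2000000 in
lemma exponent_le {m e : ℕ} (hm : 1 < m) (he : HasAbelianPower a m e) :
    (e : ℝ) ≤ Real.sqrt 5 * m + 1 := by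
  rcases he with ⟨n, -, hpar⟩
  rcases Nat.lt_or_ge e 2 with h2 | h2
  · have hm1 : (1:ℝ) ≤ (m:ℝ) := by exact_mod_cast hm.le
    have he1 : (e:ℝ) ≤ 1 := by exact_mod_cast Nat.lt_succ_iff.mp h2
    nlinarith [sqrt5_pos]
  set D : ℤ := fl a (n + m) - fl a n with hD
  have key : ∀ j ≤ e, fl a (n + j * m) = fl a n + j * D := by
    intro j hj
    induction j with
    | zero => simp
    | succ j ih =>
        have hj' : j < e := by omega
        have h1 := (parikh_eq_iff a_pos.le a_lt_one (n + j*m) n m).1 (hpar j hj')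
        have hind := ih (by omega)
        have hc : n + j*m + m = n + (j+1)*m := by ring
        rw [hc] at h1
        push_cast
        have : fl a (n + (j+1)*m) = fl a (n + j*m) + D := by omega
        rw [this, hind]; push_cast; ring
  set δ : ℝ := (m : ℝ) * a - (D : ℝ) with hδ
  set x : ℝ := Int.fract ((n : ℝ) * a) with hx
  have hfr : ∀ j ≤ e, Int.fract (((n + j*m : ℕ) : ℝ) * a) = x + j * δ := by
    intro j hj
    rw [fract_eq, key j hj, hx, fract_eq]
    push_cast; ring
  have hx0 : 0 ≤ x := Int.fract_nonneg _
  have hx1 : x < 1 := Int.fract_lt_one _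
  have he0 : 0 ≤ x + e * δ := by
    rw [← hfr e le_rfl]; exact Int.fract_nonneg _
  have he1 : x + e * δ < 1 := by
    rw [← hfr e le_rfl]; exact Int.fract_lt_one _
  have hfr1 := hfr 1 (by omega)
  have h10 : 0 ≤ x + δ := by
    have := Int.fract_nonneg (((n + 1*m : ℕ) : ℝ) * a)
    rw [hfr1] at this; push_cast at this; linarith
  have h11 : x + δ < 1 := by
    have := Int.fract_lt_one (((n + 1*m : ℕ) : ℝ) * a)
    rw [hfr1] at this; push_cast at this; linarith
  have hδ1 : |δ| < 1 := by rw [abs_lt]; constructor <;> linarith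
  have heδ : (e : ℝ) * |δ| < 1 := by
    rcases le_or_gt 0 δ with h | h
    · rw [abs_of_nonneg h]; nlinarith
    · rw [abs_of_neg h]; nlinarith
  have hirr : Irrational ((m : ℝ) * a) := irr_a.natCast_mul (by omega)
  have hδ0 : δ ≠ 0 := by
    intro h
    exact (hirr.ne_int D) (by linarith [hδ ▸ h] )
  have hDm : (D : ℝ) < (m : ℝ) * a + 1 := by
    have := abs_lt.1 hδ1
    linarith [this.2]
  have hD0 : (0 : ℝ) ≤ D := by
    have : (0 : ℤ) ≤ D := by
      rw [hD]
      have : fl a n ≤ fl a (n + m) := by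
        apply Int.floor_le_floor
        have : (n : ℝ) ≤ ((n + m : ℕ) : ℝ) := by push_cast; linarith [Nat.cast_nonneg (α := ℝ) m]
        nlinarith [a_pos]
      omega
    exact_mod_cast this
  set S : ℝ := (m : ℝ) * a + D + m with hS
  have hS0 : 0 < S := by
    have hm1 : (1 : ℝ) ≤ m := by exact_mod_cast hm.le
    rw [hS]; nlinarith [a_pos]
  have hSlt : S < Real.sqrt 5 * m + 1 := by
    rw [hS, sqrt5_eq]; nlinarith
  -- the integer m² - D² - Dm is nonzero and equals δ * S
  have hfac : ((m^2 - D^2 - D*m : ℤ) : ℝ) = δ * S := by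
    push_cast; rw [hδ, hS]; nlinarith [a_sq]
  have hNne : (m^2 - D^2 - D*m : ℤ) ≠ 0 := by
    intro h
    have hfac0 : δ * S = 0 := by rw [← hfac, h]; norm_num
    rcases mul_eq_zero.1 hfac0 with h' | h'
    · exact hδ0 h'
    · exact absurd h' (ne_of_gt hS0)
  have hone : 1 ≤ |δ| * S := by
    have : (1 : ℝ) ≤ |((m^2 - D^2 - D*m : ℤ) : ℝ)| := by
      rw [← Int.cast_abs]
      exact_mod_cast Int.one_le_abs hNne
    calc (1:ℝ) ≤ |((m^2 - D^2 - D*m : ℤ) : ℝ)| := this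
    _ = |δ * S| := by rw [hfac]
    _ = |δ| * S := by rw [abs_mul, abs_of_pos hS0]
  have : (e : ℝ) ≤ (e : ℝ) * (|δ| * S) := by
    nlinarith [Nat.cast_nonneg (α := ℝ) e]
  have h2' : (e : ℝ) * (|δ| * S) < S := by
    calc (e : ℝ) * (|δ| * S) = ((e : ℝ) * |δ|) * S := by ring
    _ < 1 * S := by exact mul_lt_mul_of_pos_right heδ hS0
    _ = S := by ring
  linarith

lemma neg_a_odd (j : ℕ) : (-a)^(2*j+1) = -(a^(2*j+1)) := Odd.neg_pow ⟨j, by ring⟩ a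

/-- `fib (2i+1) * a = fib (2i) + a^(2i+1)` -/
lemma fib_a_odd (i : ℕ) : (Nat.fib (2*i+1) : ℝ) * a = (Nat.fib (2*i) : ℝ) + a^(2*i+1) := by
  have := fib_a (2*i)
  rw [neg_a_odd i] at this
  linarith

/-- Lucas number `L_{2i+1} = fib (2i+2) + fib (2i) = ph^(2i+1) - a^(2i+1)` -/
lemma lucas_odd (i : ℕ) : ((Nat.fib (2*i+2) : ℝ) + Nat.fib (2*i)) = ph^(2*i+1) - a^(2*i+1) := by
  have := lucas_eq (2*i)
  rw [neg_a_odd i] at this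
  linarith

lemma ph_a_pow (n : ℕ) : ph^n * a^n = 1 := by
  rw [← mul_pow, mul_comm, a_mul_ph, one_pow]

lemma a_pow_pos (n : ℕ) : 0 < a^n := pow_pos a_pos n

lemma a_pow_lt_one (n : ℕ) (hn : n ≠ 0) : a^n < 1 := pow_lt_one₀ a_pos.le a_lt_one hn

/-- key numeric identity: `e * a^(2i+1) = 1 - a^(4i+2)` where `e = fib(2i+2) + fib(2i)` -/
lemma e_mul (i : ℕ) :
    ((Nat.fib (2*i+2) + Nat.fib (2*i) : ℕ) : ℝ) * a^(2*i+1) = 1 - a^(4*i+2) := by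
  push_cast
  rw [lucas_odd i, sub_mul]
  have h1 : ph^(2*i+1) * a^(2*i+1) = 1 := ph_a_pow _
  have h2 : a^(2*i+1) * a^(2*i+1) = a^(4*i+2) := by rw [← pow_add]; ring_nf
  rw [h1, h2]

lemma floor_key (i t : ℕ) (ht : t ≤ Nat.fib (2*i+2) + Nat.fib (2*i)) :
    fl a (Nat.fib (4*i+3) + t * Nat.fib (2*i+1))
      = (Nat.fib (4*i+2) : ℤ) + t * (Nat.fib (2*i) : ℤ) := by
  have hval : ((Nat.fib (4*i+3) + t * Nat.fib (2*i+1) : ℕ) : ℝ) * a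
      = ((Nat.fib (4*i+2) : ℤ) + t * (Nat.fib (2*i) : ℤ) : ℤ)
        + (a^(4*i+3) + t * a^(2*i+1)) := by
    push_cast
    rw [add_mul]
    have h1 : (Nat.fib (4*i+3) : ℝ) * a = (Nat.fib (4*i+2) : ℝ) + a^(4*i+3) := by
      have := fib_a_odd (2*i+1)
      have e1 : 2*(2*i+1)+1 = 4*i+3 := by ring
      have e2 : 2*(2*i+1) = 4*i+2 := by ring
      rw [e1, e2] at this
      exact this
    have h2 : (Nat.fib (2*i+1) : ℝ) * a = (Nat.fib (2*i) : ℝ) + a^(2*i+1) := fib_a_odd i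
    rw [mul_assoc, h1, h2]; ring
  have hr0 : (0:ℝ) ≤ a^(4*i+3) + t * a^(2*i+1) := by
    have := a_pow_pos (4*i+3)
    have := a_pow_pos (2*i+1)
    have : (0:ℝ) ≤ (t:ℝ) := Nat.cast_nonneg t
    positivity
  have hr1 : a^(4*i+3) + t * a^(2*i+1) < 1 := by
    have hle : (t : ℝ) * a^(2*i+1) ≤ 1 - a^(4*i+2) := by
      rw [← e_mul i]
      have : (t:ℝ) ≤ ((Nat.fib (2*i+2) + Nat.fib (2*i) : ℕ) : ℝ) := by exact_mod_cast ht
      nlinarith [a_pow_pos (2*i+1)]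
    have h43 : a^(4*i+3) = a^(4*i+2) * a := by ring
    nlinarith [a_pow_pos (4*i+2), a_lt_one, a_pos]
  rw [fl, hval]
  rw [add_comm]
  rw [Int.floor_add_intCast]
  have : ⌊a^(4*i+3) + t * a^(2*i+1)⌋ = 0 := by
    rw [Int.floor_eq_zero_iff, Set.mem_Ico]; exact ⟨hr0, hr1⟩
  omega

lemma hasPow (i : ℕ) :
    HasAbelianPower a (Nat.fib (2*i+1)) (Nat.fib (2*i+2) + Nat.fib (2*i)) := by
  refine ⟨Nat.fib (4*i+3), ?_, ?_⟩
  · have : 0 < Nat.fib (4*i+3) := Nat.fib_pos.2 (by omega)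
    omega
  · intro t ht
    rw [parikh_eq_iff a_pos.le a_lt_one]
    have k0 := floor_key i 0 (by omega)
    have k1 := floor_key i 1 (by omega)
    have kt := floor_key i t (by omega)
    have kt1 := floor_key i (t+1) (by omega)
    simp only [zero_mul, add_zero, Nat.zero_eq] at k0
    have e1 : Nat.fib (4*i+3) + t * Nat.fib (2*i+1) + Nat.fib (2*i+1)
        = Nat.fib (4*i+3) + (t+1) * Nat.fib (2*i+1) := by ring
    have e2 : Nat.fib (4*i+3) + Nat.fib (2*i+1)
        = Nat.fib (4*i+3) + 1 * Nat.fib (2*i+1) := by ring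
    rw [e1, e2, kt, kt1, k1, k0]
    push_cast; ring

lemma fib_sqrt5_odd (i : ℕ) :
    (Nat.fib (2*i+1) : ℝ) * Real.sqrt 5 = ph^(2*i+1) + a^(2*i+1) := by
  have := fib_sqrt5 (2*i+1)
  rw [neg_a_odd i] at this
  linarith

/-- lower bound on the ratio along odd-index Fibonacci periods -/
lemma ratio_ge {i : ℕ} {ε : ℝ} (hi : 1 ≤ i) (hε : a^(2*i+1) ≤ ε / 2) :
    (Real.sqrt 5 - ε) * (Nat.fib (2*i+1) : ℝ) ≤ ((Nat.fib (2*i+2) + Nat.fib (2*i) : ℕ) : ℝ) := by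
  have h1 : (1:ℝ) ≤ (Nat.fib (2*i+1) : ℝ) := by
    exact_mod_cast Nat.one_le_iff_ne_zero.2 (Nat.fib_pos.2 (by omega)).ne'
  have h2 := fib_sqrt5_odd i
  have h3 := lucas_odd i
  have h4 : ((Nat.fib (2*i+2) + Nat.fib (2*i) : ℕ) : ℝ)
      = ph^(2*i+1) - a^(2*i+1) := by push_cast; linarith
  nlinarith [pow_pos a_pos (2*i+1)]


end Fib5

open Fib5

/-- Let `α = φ - 1 = (√5 - 1)/2`, so that `s_{α,0}` is the Fibonacci
infinite word. If `k m` is for every `m > 1` the maximal exponent of an abelian power of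
period `m` in `s_{α,0}` (with `k m = 1` if there is none of exponent `≥ 2`), then
`limsup k_m/m = √5`. -/
theorem limsup_abelian_exponent_fibonacci_eq_sqrt5
    (k : ℕ → ℕ)
    (hk : ∀ m, 1 < m →
      IsGreatest {e : ℕ | 2 ≤ e ∧ HasAbelianPower ((Real.sqrt 5 - 1) / 2) m e} (k m) ∨
      ((∀ e, 2 ≤ e → ¬ HasAbelianPower ((Real.sqrt 5 - 1) / 2) m e) ∧ k m = 1)) :
    Filter.limsup (fun m : ℕ => (k m : ℝ) / (m : ℝ)) Filter.atTop = Real.sqrt 5 := by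
  have ha : ((Real.sqrt 5 - 1) / 2) = a := rfl
  rw [ha] at hk
  set f : ℕ → ℝ := fun m : ℕ => (k m : ℝ) / (m : ℝ) with hf
  -- eventual upper bound
  have hub : ∀ᶠ m in atTop, f m ≤ Real.sqrt 5 + 1 / (m : ℝ) := by
    rw [eventually_atTop]
    refine ⟨2, fun m hm => ?_⟩
    have hm0 : (0:ℝ) < m := by
      have : 0 < m := by omega
      exact_mod_cast this
    have hkm : (k m : ℝ) ≤ Real.sqrt 5 * m + 1 := by
      rcases hk m (by omega) with ⟨⟨-, hpow⟩, -⟩ | ⟨-, h1⟩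
      · exact exponent_le (by omega) hpow
      · rw [h1]; push_cast; nlinarith [sqrt5_pos]
    show (k m : ℝ) / (m : ℝ) ≤ Real.sqrt 5 + 1 / (m : ℝ)
    rw [div_le_iff₀ hm0]
    have : (Real.sqrt 5 + 1 / (m:ℝ)) * m = Real.sqrt 5 * m + 1 := by field_simp
    linarith
  have hg : Tendsto (fun m : ℕ => Real.sqrt 5 + 1 / (m:ℝ)) atTop (nhds (Real.sqrt 5)) := by
    have := tendsto_const_nhds (x := Real.sqrt 5) (f := atTop (α := ℕ))
    have h0 := tendsto_one_div_atTop_nhds_zero_nat (𝕜 := ℝ)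
    have := this.add h0
    simpa using this
  have hgb : IsBoundedUnder (· ≤ ·) atTop (fun m : ℕ => Real.sqrt 5 + 1 / (m:ℝ)) :=
    hg.isBoundedUnder_le
  have hfb : IsBoundedUnder (· ≤ ·) atTop f := hgb.mono_le hub
  have hflow : IsBoundedUnder (· ≥ ·) atTop f := by
    refine ⟨0, ?_⟩
    rw [eventually_map]
    filter_upwards with m
    show 0 ≤ (k m : ℝ) / (m : ℝ)
    positivity
  have hcob : IsCoboundedUnder (· ≤ ·) atTop f := hflow.isCoboundedUnder_le
  refine le_antisymm ?_ ?_
  · calc limsup f atTop ≤ limsup (fun m : ℕ => Real.sqrt 5 + 1 / (m:ℝ)) atTop :=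
        limsup_le_limsup hub hcob hgb
    _ = Real.sqrt 5 := hg.limsup_eq
  · by_contra hlt
    push_neg at hlt
    set L := limsup f atTop with hL
    set ε := (Real.sqrt 5 - L) / 2 with hε
    have hε0 : 0 < ε := by rw [hε]; linarith
    have hfreq : ∃ᶠ m in atTop, Real.sqrt 5 - ε ≤ f m := by
      rw [frequently_atTop]
      intro N
      obtain ⟨j0, hj0⟩ := exists_pow_lt_of_lt_one (half_pos hε0) a_lt_one
      set i := max (max N 2) j0 with hi
      have hi2 : 2 ≤ i := le_max_of_le_left (le_max_right _ _)
      have hiN : N ≤ i := le_max_of_le_left (le_max_left _ _)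
      have hij : j0 ≤ i := le_max_right _ _
      set m := Nat.fib (2*i+1) with hmdef
      have hm5 : 5 ≤ 2*i+1 := by omega
      have hmge : 2*i+1 ≤ m := Nat.le_fib_self hm5
      have hmN : N ≤ m := by omega
      have hm1 : 1 < m := by omega
      refine ⟨m, hmN, ?_⟩
      have hpowa : a^(2*i+1) ≤ ε / 2 := by
        calc a^(2*i+1) ≤ a^j0 :=
          pow_le_pow_of_le_one a_pos.le a_lt_one.le (by omega)
        _ ≤ ε / 2 := hj0.le
      set e := Nat.fib (2*i+2) + Nat.fib (2*i) with hedef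
      have he2 : 2 ≤ e := by
        have : 2*i+2 ≤ Nat.fib (2*i+2) := Nat.le_fib_self (by omega)
        omega
      have hpow := hasPow i
      have hkm : e ≤ k m := by
        rcases hk m hm1 with ⟨-, hub'⟩ | ⟨hno, -⟩
        · exact hub' ⟨he2, hpow⟩
        · exact absurd hpow (hno e he2)
      have hm0 : (0:ℝ) < m := by
        have : 0 < m := by omega
        exact_mod_cast this
      show Real.sqrt 5 - ε ≤ (k m : ℝ) / (m : ℝ)
      rw [sub_le_iff_le_add] at *
      rw [← sub_le_iff_le_add]
      rw [le_div_iff₀ hm0]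
      have hr := ratio_ge (by omega : 1 ≤ i) hpowa
      have : (e : ℝ) ≤ (k m : ℝ) := by exact_mod_cast hkm
      calc (Real.sqrt 5 - ε) * (m : ℝ) ≤ (e : ℝ) := hr
      _ ≤ (k m : ℝ) := this
    have := le_limsup_of_frequently_le hfreq hfb
    rw [← hL] at this
    have : Real.sqrt 5 - ε ≤ L := this
    rw [hε] at this
    linarith
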